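/- Let p_M ∈ (0,1) satisfy 1 − F(p_M) = p_M·f(p_M) and let p_B ∈ (0,1) satisfy D_B(p_B) = 0. Then p_B ≥ p_M. Consequently, off-platform consumer surplus and off-platform welfare are weakly lower in the presence of the platform: ∫_{p_B}^1 (v − p_B) f(v) dv ≤ ∫_{p_M}^1 (v − p_M) f(v) dv and ∫_{p_B}^1 v f(v) dv ≤ ∫_{p_M}^1 v f(v) dv. -/
import Mathlib

open intervalIntegral

/-- Four-point inequality for concave functions: if `a + d = b + c` with
`a ≤ b ≤ d`, then `g a + g d ≤ g b + g c`. -/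
lemma concave_four_point {g : ℝ → ℝ} {s : Set ℝ} (hg : ConcaveOn ℝ s g)
    {a b c d : ℝ} (ha : a ∈ s) (hd : d ∈ s) (hab : a ≤ b) (hbd : b ≤ d)
    (hsum : a + d = b + c) : g a + g d ≤ g b + g c := by
  rcases eq_or_lt_of_le (hab.trans hbd) with h | h
  · have hba : b = a := le_antisymm (by linarith) hab
    have hca : c = d := by linarith
    rw [hba, hca]
  · set α : ℝ := (d - b) / (d - a) with hα
    have hda : (0:ℝ) < d - a := by linarith
    have hα0 : 0 ≤ α := div_nonneg (by linarith) hda.le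
    have hα1 : 0 ≤ 1 - α := by
      have : α ≤ 1 := by
        rw [hα, div_le_one hda]; linarith
      linarith
    have hb : α • a + (1 - α) • d = b := by
      simp only [smul_eq_mul, hα]
      field_simp
      ring
    have hc : (1 - α) • a + α • d = c := by
      simp only [smul_eq_mul, hα]
      field_simp
      nlinarith [hsum]
    have h1 := hg.2 ha hd hα0 hα1 (by ring)
    have h2 := hg.2 ha hd hα1 hα0 (by ring)
    rw [hb] at h1
    rw [hc] at h2
    simp only [smul_eq_mul] at h1 h2
    linarith

/-- The bidding-equilibrium posted price exceeds the stand-alone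
monopoly price, hence off-platform consumer surplus and welfare are weakly
lower in the presence of the platform. -/
theorem bidding_price_above_monopoly
    (f F : ℝ → ℝ)
    (hf_cont : ContinuousOn f (Set.Icc 0 1))
    (hf_pos : ∀ x ∈ Set.Icc (0:ℝ) 1, 0 < f x)
    (hf_logconcave : ConcaveOn ℝ (Set.Icc 0 1) (Real.log ∘ f))
    (hf_int : (∫ t in (0:ℝ)..1, f t) = 1)
    (hF : ∀ x, F x = ∫ t in (0:ℝ)..x, f t)
    (J : ℕ) (hJ : 2 ≤ J)
    (lam : ℝ) (hlam : lam ∈ Set.Ioo (0:ℝ) 1)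
    (pM pB : ℝ) (hpM : pM ∈ Set.Ioo (0:ℝ) 1) (hpB : pB ∈ Set.Ioo (0:ℝ) 1)
    (hM : 1 - F pM = pM * f pM)
    (hB : (1 - lam) * (1 - F pB - pB * f pB)
        + lam * (J : ℝ) * (∫ v in pB..1, F (v - pB) ^ (J - 1) * f v) = 0) :
    pM ≤ pB ∧
    (∫ v in pB..1, (v - pB) * f v) ≤ (∫ v in pM..1, (v - pM) * f v) ∧
    (∫ v in pB..1, v * f v) ≤ (∫ v in pM..1, v * f v) := by
  obtain ⟨hpM0, hpM1⟩ := hpM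
  obtain ⟨hpB0, hpB1⟩ := hpB
  obtain ⟨hlam0, hlam1⟩ := hlam
  -- generic integrability helper
  have hInt : ∀ (g : ℝ → ℝ), ContinuousOn g (Set.Icc 0 1) →
      ∀ a b : ℝ, 0 ≤ a → a ≤ b → b ≤ 1 → IntervalIntegrable g MeasureTheory.volume a b := by
    intro g hg a b h0 hab h1
    exact (hg.mono (by rw [Set.uIcc_of_le hab]; exact Set.Icc_subset_Icc h0 h1)).intervalIntegrable
  have hfi : ∀ a b : ℝ, 0 ≤ a → a ≤ b → b ≤ 1 →
      IntervalIntegrable f MeasureTheory.volume a b := hInt f hf_cont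
  -- tail representation of 1 - F
  have hFsplit : ∀ x : ℝ, 0 ≤ x → x ≤ 1 → 1 - F x = ∫ t in x..1, f t := by
    intro x h0 h1
    have := integral_add_adjacent_intervals (hfi 0 x le_rfl h0 h1) (hfi x 1 h0 h1 le_rfl)
    rw [hf_int] at this
    rw [hF x]
    linarith
  -- continuity of F on [0,1]
  have hFc : ContinuousOn F (Set.Icc 0 1) := by
    have hIOn : MeasureTheory.IntegrableOn f (Set.uIcc (0:ℝ) 1) MeasureTheory.volume := by
      rw [Set.uIcc_of_le zero_le_one]
      exact hf_cont.integrableOn_Icc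
    have := intervalIntegral.continuousOn_primitive_interval (a := (0:ℝ)) (b := 1) hIOn
    rw [Set.uIcc_of_le zero_le_one] at this
    exact this.congr fun x _ => hF x
  -- positivity of F on (0,1]
  have hFpos : ∀ x : ℝ, 0 < x → x ≤ 1 → 0 < F x := by
    intro x hx0 hx1
    rw [hF x]
    exact intervalIntegral_pos_of_pos_on (hfi 0 x le_rfl hx0.le hx1)
      (fun t ht => hf_pos t ⟨ht.1.le, ht.2.le.trans hx1⟩) hx0
  -- F < 1 on [0,1)
  have hFlt1 : ∀ x : ℝ, 0 ≤ x → x < 1 → F x < 1 := by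
    intro x hx0 hx1
    have h : 0 < ∫ t in x..1, f t :=
      intervalIntegral_pos_of_pos_on (hfi x 1 hx0 hx1.le le_rfl)
        (fun t ht => hf_pos t ⟨hx0.trans ht.1.le, ht.2.le⟩) hx1
    rw [← hFsplit x hx0 hx1.le] at h
    linarith
  have hf_nonneg : ∀ x ∈ Set.Icc (0:ℝ) 1, 0 ≤ f x := fun x hx => (hf_pos x hx).le
  -- hazard rate monotonicity from log-concavity
  have hazard : ∀ x y : ℝ, 0 ≤ x → x ≤ y → y ≤ 1 →
      f x * (1 - F y) ≤ f y * (1 - F x) := by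
    intro x y hx0 hxy hy1
    have hx1 : x ≤ 1 := hxy.trans hy1
    have hy0 : 0 ≤ y := hx0.trans hxy
    set d : ℝ := y - x with hd
    have hd0 : 0 ≤ d := by simp [hd]; linarith
    -- pointwise inequality from log-concavity
    have key : ∀ t ∈ Set.Icc y 1, f x * f t ≤ f y * f (t - d) := by
      intro t ht
      have ht0 : 0 ≤ t := hy0.trans ht.1
      have hc0 : 0 ≤ t - d := by simp [hd]; linarith [ht.1]
      have hc1 : t - d ≤ 1 := by simp [hd]; linarith [ht.2]
      have h4 := concave_four_point hf_logconcave (a := x) (b := y) (c := t - d) (d := t)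
        ⟨hx0, hx1⟩ ⟨ht0, ht.2⟩ hxy ht.1 (by ring)
      simp only [Function.comp_apply] at h4
      have e1 : f x * f t = Real.exp (Real.log (f x) + Real.log (f t)) := by
        rw [Real.exp_add, Real.exp_log (hf_pos x ⟨hx0, hx1⟩),
          Real.exp_log (hf_pos t ⟨ht0, ht.2⟩)]
      have e2 : f y * f (t - d) = Real.exp (Real.log (f y) + Real.log (f (t - d))) := by
        rw [Real.exp_add, Real.exp_log (hf_pos y ⟨hy0, hy1⟩),
          Real.exp_log (hf_pos (t - d) ⟨hc0, hc1⟩)]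
      rw [e1, e2]
      exact Real.exp_le_exp.mpr h4
    -- integrability of the shifted density
    have hshift : IntervalIntegrable (fun t => f (t - d)) MeasureTheory.volume y 1 := by
      have hcont : ContinuousOn (fun t => f (t - d)) (Set.Icc y 1) := by
        apply hf_cont.comp (Continuous.continuousOn (by continuity))
        intro t ht
        exact ⟨by simp [hd]; linarith [ht.1], by simp [hd]; linarith [ht.2]⟩
      exact (hcont.mono (by rw [Set.uIcc_of_le hy1])).intervalIntegrable
    have step1 : f x * (1 - F y) ≤ f y * ∫ t in y..1, f (t - d) := by
      rw [hFsplit y hy0 hy1, ← intervalIntegral.integral_const_mul,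
        ← intervalIntegral.integral_const_mul]
      exact integral_mono_on hy1
        ((hfi y 1 hy0 hy1 le_rfl).const_mul _) (hshift.const_mul _) key
    have step2 : (∫ t in y..1, f (t - d)) ≤ 1 - F x := by
      rw [intervalIntegral.integral_comp_sub_right (fun t => f t) d]
      have hyd : y - d = x := by simp [hd]
      have h1d : 1 - d ≤ 1 := by linarith
      have hx1d : x ≤ 1 - d := by simp [hd]; linarith
      rw [hyd, hFsplit x hx0 hx1]
      have hsum := integral_add_adjacent_intervals
        (hfi x (1 - d) hx0 hx1d (by linarith)) (hfi (1 - d) 1 (by simp [hd]; linarith) h1d le_rfl)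
      have hnn : 0 ≤ ∫ t in (1 - d)..1, f t :=
        integral_nonneg h1d (fun u hu => hf_nonneg u ⟨le_trans (by simp [hd]; linarith) hu.1, hu.2⟩)
      linarith
    calc f x * (1 - F y) ≤ f y * ∫ t in y..1, f (t - d) := step1
      _ ≤ f y * (1 - F x) :=
        mul_le_mul_of_nonneg_left step2 (hf_nonneg y ⟨hy0, hy1⟩)
  -- Step: the bidding integral is positive
  have hIpos : 0 < ∫ v in pB..1, F (v - pB) ^ (J - 1) * f v := by
    apply intervalIntegral_pos_of_pos_on
    · have hcont : ContinuousOn (fun v => F (v - pB) ^ (J - 1) * f v) (Set.Icc pB 1) := by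
        apply ContinuousOn.mul ?_ (hf_cont.mono (Set.Icc_subset_Icc hpB0.le le_rfl))
        apply ContinuousOn.pow
        apply hFc.comp (Continuous.continuousOn (by continuity))
        intro v hv
        exact ⟨by simp; linarith [hv.1], by simp; linarith [hv.2]⟩
      exact (hcont.mono (by rw [Set.uIcc_of_le hpB1.le])).intervalIntegrable
    · intro v hv
      have h1 : 0 < F (v - pB) := hFpos _ (by linarith [hv.1]) (by linarith [hv.2, hpB0])
      have h2 : 0 < f v := hf_pos v ⟨by linarith [hv.1, hpB0], hv.2.le⟩
      positivity
    · exact hpB1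
  -- Step: first-order condition gives 1 - F pB < pB * f pB
  have hJpos : (0:ℝ) < (J : ℝ) := by exact_mod_cast (by omega : 0 < J)
  have hG : 1 - F pB < pB * f pB := by
    nlinarith [mul_pos (mul_pos hlam0 hJpos) hIpos]
  -- Step: pM ≤ pB via hazard monotonicity
  have hMB : pM ≤ pB := by
    by_contra hcon
    push_neg at hcon
    have haz := hazard pB pM hpB0.le hcon.le hpM1.le
    have hfB : 0 < f pB := hf_pos pB ⟨hpB0.le, hpB1.le⟩
    have hfM : 0 < f pM := hf_pos pM ⟨hpM0.le, hpM1.le⟩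
    have hFM : 0 < 1 - F pM := by linarith [hFlt1 pM hpM0.le hpM1]
    have hFB : 0 < 1 - F pB := by linarith [hFlt1 pB hpB0.le hpB1]
    nlinarith [mul_pos hfB hFM, mul_pos hfM hFB, mul_pos hpB0 hfB]
  refine ⟨hMB, ?_, ?_⟩
  · -- consumer surplus comparison
    have i1 : IntervalIntegrable (fun v => (v - pM) * f v) MeasureTheory.volume pM pB :=
      hInt _ ((continuousOn_id.sub continuousOn_const).mul hf_cont) pM pB hpM0.le hMB hpB1.le
    have i2 : IntervalIntegrable (fun v => (v - pM) * f v) MeasureTheory.volume pB 1 :=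
      hInt _ ((continuousOn_id.sub continuousOn_const).mul hf_cont) pB 1 hpB0.le hpB1.le le_rfl
    have i3 : IntervalIntegrable (fun v => (v - pB) * f v) MeasureTheory.volume pB 1 :=
      hInt _ ((continuousOn_id.sub continuousOn_const).mul hf_cont) pB 1 hpB0.le hpB1.le le_rfl
    have hsplit := integral_add_adjacent_intervals i1 i2
    have t1 : 0 ≤ ∫ v in pM..pB, (v - pM) * f v :=
      integral_nonneg hMB fun u hu =>
        mul_nonneg (by linarith [hu.1]) (hf_nonneg u ⟨hpM0.le.trans hu.1, hu.2.trans hpB1.le⟩)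
    have t2 : (∫ v in pB..1, (v - pB) * f v) ≤ ∫ v in pB..1, (v - pM) * f v :=
      integral_mono_on hpB1.le i3 i2 fun v hv =>
        mul_le_mul_of_nonneg_right (by linarith)
          (hf_nonneg v ⟨hpB0.le.trans hv.1, hv.2⟩)
    linarith
  · -- welfare comparison
    have i1 : IntervalIntegrable (fun v => v * f v) MeasureTheory.volume pM pB :=
      hInt _ (continuousOn_id.mul hf_cont) pM pB hpM0.le hMB hpB1.le
    have i2 : IntervalIntegrable (fun v => v * f v) MeasureTheory.volume pB 1 :=
      hInt _ (continuousOn_id.mul hf_cont) pB 1 hpB0.le hpB1.le le_rfl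
    have hsplit := integral_add_adjacent_intervals i1 i2
    have t1 : 0 ≤ ∫ v in pM..pB, v * f v :=
      integral_nonneg hMB fun u hu =>
        mul_nonneg (hpM0.le.trans hu.1) (hf_nonneg u ⟨hpM0.le.trans hu.1, hu.2.trans hpB1.le⟩)
    linarith
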